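/- Let p > 3 be a prime and let G = Z/pZ. If U and V are square-free sequences over G with |U| = |V| = 3 (equivalently, 3-element subsets of G), then |U·V| ≥ 4. -/

import Mathlib

/-- The weighted product set `S · T` of two sequences (multisets) over a commutative ring. -/
def wProd {G : Type*} [CommRing G] (S T : Multiset G) : Set G :=
  { g | ∃ l1 l2 : List G, (l1 : Multiset G) = S ∧ (l2 : Multiset G) = T ∧
      (List.zipWith (· * ·) l1 l2).sum = g }

lemma four_le {F : Type*} [DecidableEq F] {a b c d : F} {S : Finset F}
    (hab : a≠b) (hac : a≠c) (had : a≠d) (hbc : b≠c) (hbd : b≠d) (hcd : c≠d)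
    (ha : a∈S) (hb : b∈S) (hc : c∈S) (hd : d∈S) : 4 ≤ S.card := by
  have hsub : ({a,b,c,d} : Finset F) ⊆ S := by
    intro x hx
    simp only [Finset.mem_insert, Finset.mem_singleton] at hx
    rcases hx with rfl|rfl|rfl|rfl <;> assumption
  have h4 : ({a,b,c,d} : Finset F).card = 4 := by
    rw [Finset.card_insert_of_notMem (by simp [hab,hac,had]),
        Finset.card_insert_of_notMem (by simp [hbc,hbd]),
        Finset.card_insert_of_notMem (by simp [hcd]), Finset.card_singleton]
  calc 4 = ({a,b,c,d} : Finset F).card := h4.symm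
    _ ≤ S.card := Finset.card_le_card hsub

lemma keyK {F : Type*} [Field F] [DecidableEq F] (h3 : (3:F) ≠ 0)
    (γ ζ : F) (hγ0 : γ ≠ 0) (hγ1 : γ ≠ 1) (hζ0 : ζ ≠ 0) (hζ1 : ζ ≠ 1) :
    4 ≤ ({1+γ*ζ, ζ+γ, γ*ζ, ζ, γ, 1} : Finset F).card := by
  have m1 : 1+γ*ζ ∈ ({1+γ*ζ, ζ+γ, γ*ζ, ζ, γ, 1} : Finset F) := by simp
  have m2 : ζ+γ ∈ ({1+γ*ζ, ζ+γ, γ*ζ, ζ, γ, 1} : Finset F) := by simp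
  have m3 : γ*ζ ∈ ({1+γ*ζ, ζ+γ, γ*ζ, ζ, γ, 1} : Finset F) := by simp
  have m4 : ζ ∈ ({1+γ*ζ, ζ+γ, γ*ζ, ζ, γ, 1} : Finset F) := by simp
  have m5 : γ ∈ ({1+γ*ζ, ζ+γ, γ*ζ, ζ, γ, 1} : Finset F) := by simp
  have m6 : (1:F) ∈ ({1+γ*ζ, ζ+γ, γ*ζ, ζ, γ, 1} : Finset F) := by simp
  -- distinctness facts between "even" part {1+γζ, ζ, γ} and "odd" part {ζ+γ, γζ, 1}
  have c1 : γ ≠ γ*ζ := fun h => hζ1 (mul_left_cancel₀ hγ0 (show γ*ζ = γ*1 by linear_combination -h)).symm.symm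
  have c3 : γ ≠ ζ+γ := fun h => hζ0 (by linear_combination -h)
  have c4 : 1+γ*ζ ≠ γ*ζ := fun h => one_ne_zero (by linear_combination h)
  have c5 : 1+γ*ζ ≠ 1 := fun h => (mul_ne_zero hγ0 hζ0) (by linear_combination h)
  have c6 : 1+γ*ζ ≠ ζ+γ := fun h => (mul_ne_zero (sub_ne_zero.2 hγ1) (sub_ne_zero.2 hζ1)) (by linear_combination h)
  have c7 : ζ ≠ γ*ζ := fun h => hγ1 (mul_right_cancel₀ hζ0 (show (1:F)*ζ = γ*ζ by linear_combination h)).symm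
  have c9 : ζ ≠ ζ+γ := fun h => hγ0 (by linear_combination -h)
  by_cases hA : γ = ζ ∧ γ = 1 + γ*ζ
  · have e1 : γ*γ - γ + 1 = 0 := by linear_combination γ*hA.1 - hA.2
    have d1 : γ*ζ ≠ 1 := by
      intro h
      have e2 : γ*γ = 1 := by linear_combination h + γ*hA.1
      have hg : γ = 2 := by linear_combination e2 - e1
      exact h3 (by linear_combination e2 - (γ+2)*hg)
    have d2 : γ*ζ ≠ ζ+γ := by
      intro h
      have e2 : γ*γ = 2*γ := by linear_combination h + γ*hA.1 - hA.1
      have hg : γ = -1 := by linear_combination e1 - e2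
      exact h3 (by linear_combination e2 - (γ-3)*hg)
    have d3 : (1:F) ≠ ζ+γ := by
      intro h
      have e2 : 2*γ = 1 := by linear_combination hA.1 - h
      exact h3 (by linear_combination 4*e1 - (2*γ-1)*e2)
    exact four_le c1 hγ1 c3 d1 d2 d3.symm.symm m5 m3 m6 m2
  by_cases hB : γ*ζ = 1 ∧ γ*ζ = ζ+γ
  · have e0 : ζ + γ = 1 := by linear_combination hB.1 - hB.2
    have d1 : 1+γ*ζ ≠ ζ := by
      intro h
      have hz2 : ζ = 2 := by linear_combination hB.1 - h
      have hg : γ = -1 := by linear_combination e0 - hz2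
      exact h3 (by linear_combination -hB.1 + ζ*hg - hz2)
    have d2 : 1+γ*ζ ≠ γ := by
      intro h
      have hg : γ = 2 := by linear_combination hB.1 - h
      have hz : ζ = -1 := by linear_combination e0 - hg
      exact h3 (by linear_combination -hB.1 + γ*hz - hg)
    have d3 : ζ ≠ γ := by
      intro h
      have e2 : 2*γ = 1 := by linear_combination e0 - h
      have e3 : γ*γ = 1 := by linear_combination hB.1 - γ*h
      exact h3 (by linear_combination (2*γ+1)*e2 - 4*e3)
    exact four_le d1 d2 c5 d3 hζ1 hγ1 m1 m4 m5 m6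
  · rcases not_and_or.1 hA with hn1 | hn1 <;> rcases not_and_or.1 hB with hn2 | hn2
    · exact four_le hn1 c1 hγ1 c7.symm.symm hζ1 hn2 m5 m4 m3 m6
    · exact four_le hn1 c1 c3 c7.symm.symm c9 hn2 m5 m4 m3 m2
    · exact four_le hn1 c1 hγ1 c4 c5 hn2 m5 m1 m3 m6
    · exact four_le hn1 c1 c3 c4 c6 hn2 m5 m1 m3 m2

lemma keyL {F : Type*} [Field F] [DecidableEq F] (h3 : (3:F) ≠ 0)
    (a b c x y z : F) (hab : a ≠ b) (hac : a ≠ c) (hbc : b ≠ c)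
    (hxy : x ≠ y) (hxz : x ≠ z) (hyz : y ≠ z) :
    4 ≤ ({a*x+b*y+c*z, a*x+b*z+c*y, a*y+b*x+c*z, a*y+b*z+c*x, a*z+b*x+c*y, a*z+b*y+c*x} : Finset F).card := by
  have hba : b - a ≠ 0 := sub_ne_zero.2 (Ne.symm hab)
  have hyx : y - x ≠ 0 := sub_ne_zero.2 (Ne.symm hxy)
  obtain ⟨γ, hγ⟩ : ∃ g, c = a + (b-a)*g := ⟨(c-a)/(b-a), by field_simp; ring⟩
  obtain ⟨ζ, hζ⟩ : ∃ g, z = x + (y-x)*g := ⟨(z-x)/(y-x), by field_simp; ring⟩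
  subst hγ; subst hζ
  have hγ0 : γ ≠ 0 := fun h => hac (by rw [h]; ring)
  have hγ1 : γ ≠ 1 := fun h => hbc (by rw [h]; ring)
  have hζ0 : ζ ≠ 0 := fun h => hxz (by rw [h]; ring)
  have hζ1 : ζ ≠ 1 := fun h => hyz (by rw [h]; ring)
  refine le_trans (keyK h3 γ ζ hγ0 hγ1 hζ0 hζ1) ?_
  refine Finset.card_le_card_of_injOn
    (fun t => 3*a*x + a*(y-x)*(1+ζ) + (b-a)*x*(1+γ) + (b-a)*(y-x)*t) ?_ ?_
  · intro t ht
    simp only [Finset.mem_coe, Finset.mem_insert, Finset.mem_singleton] at ht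
    rcases ht with rfl|rfl|rfl|rfl|rfl|rfl <;>
      simp only [Finset.mem_coe, Finset.mem_insert, Finset.mem_singleton]
    · exact Or.inl (by ring)
    · exact Or.inr (Or.inl (by ring))
    · exact Or.inr (Or.inr (Or.inl (by ring)))
    · exact Or.inr (Or.inr (Or.inr (Or.inl (by ring))))
    · exact Or.inr (Or.inr (Or.inr (Or.inr (Or.inl (by ring)))))
    · exact Or.inr (Or.inr (Or.inr (Or.inr (Or.inr (by ring)))))
  · intro s _ t _ h
    have h2 : ((b-a)*(y-x))*s = ((b-a)*(y-x))*t := by linear_combination h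
    exact mul_left_cancel₀ (mul_ne_zero hba hyx) h2

theorem stmt1 (p : ℕ) (hp : p.Prime) (hp3 : 3 < p)
    (U V : Multiset (ZMod p)) (hU : U.Nodup) (hV : V.Nodup)
    (hUc : Multiset.card U = 3) (hVc : Multiset.card V = 3) :
    4 ≤ (wProd U V).ncard := by
  haveI : Fact p.Prime := ⟨hp⟩
  have h3 : (3:ZMod p) ≠ 0 := by
    have h : ((3:ℕ):ZMod p) ≠ 0 := by
      rw [Ne, ZMod.natCast_eq_zero_iff]
      intro h; have := Nat.le_of_dvd (by norm_num) h; omega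
    simpa using h
  obtain ⟨a,b,c,rfl⟩ := Multiset.card_eq_three.1 hUc
  obtain ⟨x,y,z,rfl⟩ := Multiset.card_eq_three.1 hVc
  simp only [Multiset.insert_eq_cons, Multiset.nodup_cons, Multiset.mem_cons,
    Multiset.mem_singleton, Multiset.nodup_singleton, and_true, not_or] at hU hV
  obtain ⟨⟨hab, hac⟩, hbc⟩ := hU
  obtain ⟨⟨hxy, hxz⟩, hyz⟩ := hV
  set S : Finset (ZMod p) :=
    {a*x+b*y+c*z, a*x+b*z+c*y, a*y+b*x+c*z, a*y+b*z+c*x, a*z+b*x+c*y, a*z+b*y+c*x} with hS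
  have hsub : ↑S ⊆ wProd ({a,b,c} : Multiset (ZMod p)) ({x,y,z} : Multiset (ZMod p)) := by
    intro g hg
    simp only [hS, Finset.coe_insert, Set.mem_insert_iff, Finset.coe_singleton,
      Set.mem_singleton_iff] at hg
    rcases hg with rfl|rfl|rfl|rfl|rfl|rfl
    · exact ⟨[a,b,c], [x,y,z], rfl, rfl, by simp <;> ring⟩
    · exact ⟨[a,b,c], [x,z,y], rfl,
        Multiset.coe_eq_coe.mpr (List.Perm.cons x (List.Perm.swap y z [])), by simp <;> ring⟩
    · exact ⟨[a,b,c], [y,x,z], rfl,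
        Multiset.coe_eq_coe.mpr (List.Perm.swap x y [z]), by simp <;> ring⟩
    · exact ⟨[a,b,c], [y,z,x], rfl,
        Multiset.coe_eq_coe.mpr ((List.Perm.cons y (List.Perm.swap x z [])).trans
          (List.Perm.swap x y [z])), by simp <;> ring⟩
    · exact ⟨[a,b,c], [z,x,y], rfl,
        Multiset.coe_eq_coe.mpr ((List.Perm.swap x z [y]).trans
          (List.Perm.cons x (List.Perm.swap y z []))), by simp <;> ring⟩
    · exact ⟨[a,b,c], [z,y,x], rfl,
        Multiset.coe_eq_coe.mpr ((List.Perm.swap y z [x]).trans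
          ((List.Perm.cons y (List.Perm.swap x z [])).trans (List.Perm.swap x y [z]))),
        by simp <;> ring⟩
  calc 4 ≤ S.card := keyL h3 a b c x y z hab hac hbc hxy hxz hyz
    _ = (↑S : Set (ZMod p)).ncard := (Set.ncard_coe_finset S).symm
    _ ≤ (wProd ({a,b,c} : Multiset (ZMod p)) ({x,y,z} : Multiset (ZMod p))).ncard :=
        Set.ncard_le_ncard hsub (Set.toFinite _)
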